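/- Setup: let r ≥ 2 and s ≥ 1 be integers, let G be a finite simple graph on rs vertices with a distinguished vertex x, and let V_1, …, V_r be an almost equitable coloring of G − x with small class V_1. Suppose G admits no equitable r-coloring. Then every accessible class contains a neighbor of x. Consequently, the number of non-accessible classes is at least r − deg_G(x). (This is the argument establishing inequality (4) of the paper: D(x) ⊆ B and b ≥ r − 5 when deg(x) ≤ 5.) -/

import Mathlib

open scoped Classical

namespace Equitable

variable {V : Type*}

/-- An equitable `r`-coloring of `G`: a proper coloring with `r` colors whose
color classes pairwise differ in size by at most `1`. -/
def IsEquitableColoring [Fintype V] (G : SimpleGraph V) (r : ℕ) (c : V → Fin r) : Prop :=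
  (∀ u v : V, G.Adj u v → c u ≠ c v) ∧
  ∀ i j : Fin r,
    (Finset.univ.filter fun v => c v = i).card ≤
      (Finset.univ.filter fun v => c v = j).card + 1

/-- The number of edges of `G` with both endpoints in `S`. -/
noncomputable def edgesWithin [Fintype V] (G : SimpleGraph V) (S : Finset V) : ℕ :=
  (G.edgeFinset.filter fun e => ∀ v ∈ e, v ∈ S).card

/-- The number of edges of `G` with one endpoint in `X` and the other in `Y`. -/
noncomputable def edgesBetween [Fintype V] (G : SimpleGraph V) (X Y : Finset V) : ℕ :=
  (G.edgeFinset.filter fun e => ∃ u ∈ X, ∃ w ∈ Y, e = s(u, w)).card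

/-- The semi-planar edge bounds. -/
def SemiPlanarBounds [Fintype V] (G : SimpleGraph V) : Prop :=
  (∀ S : Finset V, edgesWithin G S ≤ 3 * S.card) ∧
  ∀ X Y : Finset V, Disjoint X Y → edgesBetween G X Y ≤ 2 * (X.card + Y.card)

/-- The planar edge bounds. -/
def PlanarBounds [Fintype V] (G : SimpleGraph V) : Prop :=
  (∀ S : Finset V, 3 ≤ S.card → edgesWithin G S ≤ 3 * S.card - 6) ∧
  ∀ X Y : Finset V, Disjoint X Y → 3 ≤ X.card + Y.card →
    edgesBetween G X Y ≤ 2 * (X.card + Y.card) - 4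

/-- The semi-planar bipartite edge bound. -/
def SemiPlanarBipBound [Fintype V] (G : SimpleGraph V) : Prop :=
  ∀ X Y : Finset V, Disjoint X Y → edgesBetween G X Y ≤ 2 * (X.card + Y.card)

/-- The planar bipartite edge bound. -/
def PlanarBipBound [Fintype V] (G : SimpleGraph V) : Prop :=
  ∀ X Y : Finset V, Disjoint X Y → 3 ≤ X.card + Y.card →
    edgesBetween G X Y ≤ 2 * (X.card + Y.card) - 4

/-- `P` is an almost equitable coloring of `G − x`: a partition of `V(G) \ {x}` into `r`
independent sets, the small class `P 0` of size `s − 1` and the other classes of size `s`. -/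
def AEColoring [Fintype V] (G : SimpleGraph V) (x : V) {r : ℕ} [NeZero r] (s : ℕ)
    (P : Fin r → Finset V) : Prop :=
  (∀ i j : Fin r, i ≠ j → Disjoint (P i) (P j)) ∧
  (∀ v : V, (∃ i, v ∈ P i) ↔ v ≠ x) ∧
  (∀ i : Fin r, ∀ u ∈ P i, ∀ w ∈ P i, ¬ G.Adj u w) ∧
  (P 0).card = s - 1 ∧
  ∀ i : Fin r, i ≠ 0 → (P i).card = s

/-- The arc relation of the auxiliary digraph `H`: an arc from class `i` to class `j`
iff `i ≠ j` and some vertex of `P i` has no `G`-neighbor in `P j` (such a vertex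
is a witness of the arc and is called movable to `P j`). -/
def Arc (G : SimpleGraph V) {r : ℕ} (P : Fin r → Finset V) (i j : Fin r) : Prop :=
  i ≠ j ∧ ∃ v ∈ P i, ∀ u ∈ P j, ¬ G.Adj v u

/-- A class is accessible if the auxiliary digraph has a directed path (possibly of
length `0`) from it to the small class `P 0`. -/
def Accessible (G : SimpleGraph V) {r : ℕ} [NeZero r] (P : Fin r → Finset V)
    (i : Fin r) : Prop :=
  Relation.ReflTransGen (Arc G P) i 0

/-- The number of accessible classes. -/
noncomputable def accCount (G : SimpleGraph V) {r : ℕ} [NeZero r]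
    (P : Fin r → Finset V) : ℕ :=
  (Finset.univ.filter fun i => Accessible G P i).card

/-- No almost equitable coloring of `G − x` has more accessible classes than `P`. -/
def MaxAccessible [Fintype V] (G : SimpleGraph V) (x : V) {r : ℕ} [NeZero r] (s : ℕ)
    (P : Fin r → Finset V) : Prop :=
  ∀ P' : Fin r → Finset V, AEColoring G x s P' → accCount G P' ≤ accCount G P

/-- Class `i` blocks class `j` if `i ≠ j` and the auxiliary digraph minus the
class `i` has no directed path from `j` to the small class `P 0`. -/
def Blocks (G : SimpleGraph V) {r : ℕ} [NeZero r] (P : Fin r → Finset V)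
    (i j : Fin r) : Prop :=
  i ≠ j ∧ ¬ Relation.ReflTransGen (fun p q => Arc G P p q ∧ p ≠ i ∧ q ≠ i) j 0

/-- An accessible class is terminal if it blocks no accessible class. -/
def Terminal (G : SimpleGraph V) {r : ℕ} [NeZero r] (P : Fin r → Finset V)
    (i : Fin r) : Prop :=
  Accessible G P i ∧ ∀ j : Fin r, Accessible G P j → ¬ Blocks G P i j

/-- `u` is a solo neighbor of `v` (where `v` lies in the accessible class `P i`):
`u` lies in a non-accessible class, is adjacent to `v`, and `v` is the unique
neighbor of `u` in `P i`.  `Q(v)` is the set of such `u`. -/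
def SoloNbr (G : SimpleGraph V) {r : ℕ} [NeZero r] (P : Fin r → Finset V)
    (i : Fin r) (v u : V) : Prop :=
  (∃ k : Fin r, ¬ Accessible G P k ∧ u ∈ P k) ∧ G.Adj v u ∧
    ∀ w ∈ P i, G.Adj u w → w = v

/-- `u ∈ Q'(v)`: `u` is a solo neighbor of `v` that is non-adjacent to some other
solo neighbor of `v`. -/
def InQ' (G : SimpleGraph V) {r : ℕ} [NeZero r] (P : Fin r → Finset V)
    (i : Fin r) (v u : V) : Prop :=
  SoloNbr G P i v u ∧ ∃ u' : V, SoloNbr G P i v u' ∧ u' ≠ u ∧ ¬ G.Adj u u'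

/-- A vertex `v` of a terminal accessible class `P i` is ordinary if some other vertex of
`P i` is movable to another accessible class, or there are at most two accessible classes. -/
def Ordinary (G : SimpleGraph V) {r : ℕ} [NeZero r] (P : Fin r → Finset V)
    (i : Fin r) (v : V) : Prop :=
  (∃ v' ∈ P i, v' ≠ v ∧
    ∃ j : Fin r, j ≠ i ∧ Accessible G P j ∧ ∀ w ∈ P j, ¬ G.Adj v' w) ∨
  accCount G P ≤ 2

/-- The strong component of the auxiliary digraph containing class `i`. -/
noncomputable def strongComp (G : SimpleGraph V) {r : ℕ} (P : Fin r → Finset V)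
    (i : Fin r) : Finset (Fin r) :=
  Finset.univ.filter fun j =>
    Relation.ReflTransGen (Arc G P) i j ∧ Relation.ReflTransGen (Arc G P) j i


/-- From a chain starting at `a` passing through `b`, extract a shorter chain starting
at `b` with the same last element. -/
private lemma chain_suffix {α : Type*} {rel : α → α → Prop} :
    ∀ (l : List α) (a b : α), List.Chain rel a l → b ∈ l →
      ∃ l' : List α, l'.Sublist l ∧ l'.length < l.length ∧ List.Chain rel b l' ∧
        (b :: l').getLast (List.cons_ne_nil _ _) = (a :: l).getLast (List.cons_ne_nil _ _) := by
  intro l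
  induction l with
  | nil => intro a b _ hb; exact absurd hb (List.not_mem_nil (a := b))
  | cons c t ih =>
    intro a b hch hb
    replace hch : rel a c ∧ List.Chain rel c t := List.isChain_cons_cons.mp hch
    rcases List.mem_cons.mp hb with hbc | hbt
    · subst hbc
      exact ⟨t, List.sublist_cons_self _ _, by simp, hch.2,
        List.getLast_cons_cons.symm⟩
    · obtain ⟨l', hsub, hlt, hch', hlast⟩ := ih c b hch.2 hbt
      exact ⟨l', hsub.trans (List.sublist_cons_self c t), lt_trans hlt (by simp),
        hch', hlast.trans List.getLast_cons_cons.symm⟩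

/-- Build an equitable coloring from a partition of `V` into `r` independent sets
all of size `s`. -/
private lemma exists_coloring_of_partition {V : Type*} [Fintype V] {G : SimpleGraph V}
    {r s : ℕ} (Q : Fin r → Finset V)
    (hdisj : ∀ a b : Fin r, a ≠ b → Disjoint (Q a) (Q b))
    (hcover : ∀ v : V, ∃ a, v ∈ Q a)
    (hind : ∀ a : Fin r, ∀ u ∈ Q a, ∀ w ∈ Q a, ¬ G.Adj u w)
    (hsize : ∀ a : Fin r, (Q a).card = s) :
    ∃ c : V → Fin r, IsEquitableColoring G r c := by
  have huniq : ∀ v : V, ∃! a : Fin r, a ∈ Finset.univ ∧ v ∈ Q a := by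
    intro v
    obtain ⟨a, ha⟩ := hcover v
    refine ⟨a, ⟨Finset.mem_univ a, ha⟩, ?_⟩
    rintro b ⟨-, hb⟩
    by_contra hba
    exact (Finset.disjoint_left.mp (hdisj b a hba) hb) ha
  set c : V → Fin r := fun v => Finset.choose _ Finset.univ (huniq v) with hc
  have hcQ : ∀ v, v ∈ Q (c v) := fun v => (Finset.choose_spec _ _ (huniq v)).2
  have hcu : ∀ v a, v ∈ Q a → c v = a := by
    intro v a hva
    have h1 := (huniq v).unique ⟨Finset.mem_univ _, hcQ v⟩ ⟨Finset.mem_univ _, hva⟩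
    exact h1
  refine ⟨c, ?_, ?_⟩
  · intro u v huv hcuv
    exact hind (c u) u (hcQ u) v (hcuv ▸ hcQ v) huv
  · intro a b
    have hfilt : ∀ d : Fin r, (Finset.univ.filter fun v => c v = d) = Q d := by
      intro d
      ext v
      simp only [Finset.mem_filter, Finset.mem_univ, true_and]
      exact ⟨fun h => h ▸ hcQ v, fun h => hcu v d h⟩
    rw [hfilt a, hfilt b, hsize a, hsize b]
    omega

/-- Key inductive lemma: given a chain in the auxiliary digraph from `j` to the small
class `0`, one can shift vertices along the chain to obtain a partition whose small
class is a subset of `P j`. -/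
private lemma key_lemma {V : Type*} [Fintype V] {G : SimpleGraph V} {x : V}
    {r s : ℕ} [NeZero r] (hs : 1 ≤ s) {P : Fin r → Finset V} (hP : AEColoring G x s P) :
    ∀ (n : ℕ) (j : Fin r) (l : List (Fin r)), l.length ≤ n →
      List.Chain (Arc G P) j l → (j :: l).getLast (List.cons_ne_nil _ _) = 0 →
      ∃ Q : Fin r → Finset V,
        (∀ a b : Fin r, a ≠ b → Disjoint (Q a) (Q b)) ∧
        (∀ v : V, (∃ a, v ∈ Q a) ↔ v ≠ x) ∧
        (∀ a : Fin r, ∀ u ∈ Q a, ∀ w ∈ Q a, ¬ G.Adj u w) ∧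
        (Q j).card = s - 1 ∧ (∀ a : Fin r, a ≠ j → (Q a).card = s) ∧
        Q j ⊆ P j ∧ ∀ a : Fin r, a ∉ j :: l → Q a = P a := by
  intro n
  induction n with
  | zero =>
    intro j l hlen hch hlast
    have hl : l = [] := List.length_eq_zero_iff.mp (Nat.le_zero.mp hlen)
    subst hl
    simp only [List.getLast_singleton] at hlast
    subst hlast
    exact ⟨P, hP.1, hP.2.1, hP.2.2.1, hP.2.2.2.1, fun a ha => hP.2.2.2.2 a ha,
      subset_rfl, fun a _ => rfl⟩
  | succ n ih =>
    intro j l hlen hch hlast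
    cases l with
    | nil =>
      simp only [List.getLast_singleton] at hlast
      subst hlast
      exact ⟨P, hP.1, hP.2.1, hP.2.2.1, hP.2.2.2.1, fun a ha => hP.2.2.2.2 a ha,
        subset_rfl, fun a _ => rfl⟩
    | cons m t =>
      replace hch : Arc G P j m ∧ List.Chain (Arc G P) m t := List.isChain_cons_cons.mp hch
      obtain ⟨harc, hcht⟩ := hch
      have hlast' : (m :: t).getLast (List.cons_ne_nil _ _) = 0 := by
        rwa [List.getLast_cons_cons] at hlast
      by_cases hj : j ∈ m :: t
      · -- shortcut: take the suffix chain starting at the later occurrence of `j`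
        obtain ⟨l', hsub, hlt, hch', hlast''⟩ :=
          chain_suffix (m :: t) j j (List.chain_cons.mpr ⟨harc, hcht⟩) hj
        have hlen' : l'.length ≤ n := by
          have := hlt.trans_le hlen
          omega
        obtain ⟨Q, h1, h2, h3, h4, h5, h6, h7⟩ :=
          ih j l' hlen' hch' (hlast''.trans hlast)
        refine ⟨Q, h1, h2, h3, h4, h5, h6, fun a ha => h7 a ?_⟩
        intro hmem
        rcases List.mem_cons.mp hmem with h | h
        · exact ha (h ▸ List.mem_cons_self)
        · exact ha (List.mem_cons_of_mem _ (hsub.subset h))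
      · -- main step: move the witness of the arc `j → m`
        obtain ⟨Q, Qdisj, Qcov, Qind, Qm, Qsz, QmP, Qun⟩ :=
          ih m t (by simpa using Nat.lt_succ_iff.mp (lt_of_lt_of_le (by simp) hlen)) hcht hlast'
        obtain ⟨hjm, v, hvPj, hvm⟩ := harc
        have hQj : Q j = P j := Qun j hj
        have hj0 : j ≠ 0 := by
          intro h
          exact hj (h ▸ (hlast' ▸ List.getLast_mem (List.cons_ne_nil m t)))
        have hvQj : v ∈ Q j := hQj ▸ hvPj
        have hvQm : v ∉ Q m := fun h => (Finset.disjoint_left.mp (Qdisj j m hjm) hvQj) h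
        have hvx : v ≠ x := (hP.2.1 v).mp ⟨j, hvPj⟩
        set Q' : Fin r → Finset V := fun a =>
          if a = j then (P j).erase v else if a = m then insert v (Q m) else Q a with hQ'
        have hmem : ∀ (a : Fin r) (w : V),
            w ∈ Q' a ↔ (w = v ∧ a = m) ∨ (w ≠ v ∧ w ∈ Q a) := by
          intro a w
          simp only [hQ']
          split_ifs with h1 h2
          · subst h1
            rw [Finset.mem_erase, ← hQj]
            constructor
            · rintro ⟨hw, hwQ⟩; exact Or.inr ⟨hw, hwQ⟩
            · rintro (⟨-, hjm'⟩ | ⟨hw, hwQ⟩)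
              · exact absurd hjm' hjm
              · exact ⟨hw, hwQ⟩
          · subst h2
            rw [Finset.mem_insert]
            constructor
            · rintro (hw | hw)
              · exact Or.inl ⟨hw, rfl⟩
              · by_cases hwv : w = v
                · exact Or.inl ⟨hwv, rfl⟩
                · exact Or.inr ⟨hwv, hw⟩
            · rintro (⟨hw, -⟩ | ⟨-, hw⟩)
              · exact Or.inl hw
              · exact Or.inr hw
          · constructor
            · intro hw
              refine Or.inr ⟨?_, hw⟩
              intro hwv
              exact (Finset.disjoint_left.mp (Qdisj a j h1) hw) (hwv ▸ hvQj)
            · rintro (⟨-, ham⟩ | ⟨-, hw⟩)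
              · exact absurd ham h2
              · exact hw
        refine ⟨Q', ?_, ?_, ?_, ?_, ?_, ?_, ?_⟩
        · intro a b hab
          rw [Finset.disjoint_left]
          intro w hwa hwb
          rcases (hmem a w).mp hwa with ⟨hwv, ham⟩ | ⟨hwv, hwQ⟩
          · rcases (hmem b w).mp hwb with ⟨-, hbm⟩ | ⟨hwv', -⟩
            · exact hab (ham.trans hbm.symm)
            · exact hwv' hwv
          · rcases (hmem b w).mp hwb with ⟨hwv', -⟩ | ⟨-, hwQ'⟩
            · exact hwv hwv'
            · exact (Finset.disjoint_left.mp (Qdisj a b hab) hwQ) hwQ'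
        · intro w
          constructor
          · rintro ⟨a, hwa⟩
            rcases (hmem a w).mp hwa with ⟨hwv, -⟩ | ⟨-, hwQ⟩
            · exact hwv ▸ hvx
            · exact (Qcov w).mp ⟨a, hwQ⟩
          · intro hwx
            by_cases hwv : w = v
            · exact ⟨m, (hmem m w).mpr (Or.inl ⟨hwv, rfl⟩)⟩
            · obtain ⟨a, ha⟩ := (Qcov w).mpr hwx
              exact ⟨a, (hmem a w).mpr (Or.inr ⟨hwv, ha⟩)⟩
        · intro a u hu w hw hadj
          rcases (hmem a u).mp hu with ⟨huv, ham⟩ | ⟨huv, huQ⟩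
          · subst huv
            rcases (hmem a w).mp hw with ⟨hwv, -⟩ | ⟨-, hwQ⟩
            · exact G.loopless.irrefl _ (hwv ▸ hadj)
            · exact hvm w (QmP (ham ▸ hwQ)) hadj
          · rcases (hmem a w).mp hw with ⟨hwv, ham⟩ | ⟨-, hwQ⟩
            · subst hwv
              exact hvm u (QmP (ham ▸ huQ)) hadj.symm
            · exact Qind a u huQ w hwQ hadj
        · have : Q' j = (P j).erase v := by simp [hQ']
          rw [this, Finset.card_erase_of_mem hvPj, hP.2.2.2.2 j hj0]
        · intro a haj
          by_cases ham : a = m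
          · subst ham
            have : Q' a = insert v (Q a) := by simp [hQ', haj]
            rw [this, Finset.card_insert_of_notMem hvQm, Qm]
            omega
          · have : Q' a = Q a := by simp [hQ', haj, ham]
            rw [this]
            exact Qsz a ham
        · have : Q' j = (P j).erase v := by simp [hQ']
          rw [this]
          exact Finset.erase_subset _ _
        · intro a ha
          have haj : a ≠ j := fun h => ha (h ▸ List.mem_cons_self)
          have hamt : a ∉ m :: t := fun h => ha (List.mem_cons_of_mem _ h)
          have ham : a ≠ m := fun h => hamt (h ▸ List.mem_cons_self)
          have : Q' a = Q a := by simp [hQ', haj, ham]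
          rw [this]
          exact Qun a hamt

/-- If some accessible class contains no neighbor of `x`, then `G` has an equitable
`r`-coloring. -/
private lemma exists_equitable_of_accessible {V : Type*} [Fintype V] {G : SimpleGraph V}
    {x : V} {r s : ℕ} [NeZero r] (hs : 1 ≤ s) {P : Fin r → Finset V}
    (hP : AEColoring G x s P) {i : Fin r} (hacc : Accessible G P i)
    (hx : ∀ v ∈ P i, ¬ G.Adj x v) :
    ∃ c : V → Fin r, IsEquitableColoring G r c := by
  obtain ⟨l, hch, hlast⟩ := List.exists_isChain_cons_of_relationReflTransGen hacc
  obtain ⟨Q, Qdisj, Qcov, Qind, Qi, Qsz, QiP, -⟩ :=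
    key_lemma hs hP l.length i l le_rfl hch hlast
  have hxQ : ∀ a, x ∉ Q a := fun a hxa => ((Qcov x).mp ⟨a, hxa⟩) rfl
  set Qf : Fin r → Finset V := fun a => if a = i then insert x (Q i) else Q a with hQf
  have hmem : ∀ (a : Fin r) (w : V), w ∈ Qf a ↔ (w = x ∧ a = i) ∨ w ∈ Q a := by
    intro a w
    simp only [hQf]
    split_ifs with h1
    · subst h1
      rw [Finset.mem_insert]
      exact ⟨fun h => h.imp (fun hw => ⟨hw, rfl⟩) id,
        fun h => h.imp (fun hw => hw.1) id⟩
    · exact ⟨fun h => Or.inr h, fun h => h.elim (fun hw => absurd hw.2 h1) id⟩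
  apply exists_coloring_of_partition (s := s) Qf
  · intro a b hab
    rw [Finset.disjoint_left]
    intro w hwa hwb
    rcases (hmem a w).mp hwa with ⟨hwx, hai⟩ | hwQ
    · rcases (hmem b w).mp hwb with ⟨-, hbi⟩ | hwQ'
      · exact hab (hai.trans hbi.symm)
      · exact hxQ b (hwx ▸ hwQ')
    · rcases (hmem b w).mp hwb with ⟨hwx, -⟩ | hwQ'
      · exact hxQ a (hwx ▸ hwQ)
      · exact (Finset.disjoint_left.mp (Qdisj a b hab) hwQ) hwQ'
  · intro w
    by_cases hwx : w = x
    · exact ⟨i, (hmem i w).mpr (Or.inl ⟨hwx, rfl⟩)⟩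
    · obtain ⟨a, ha⟩ := (Qcov w).mpr hwx
      exact ⟨a, (hmem a w).mpr (Or.inr ha)⟩
  · intro a u hu w hw hadj
    rcases (hmem a u).mp hu with ⟨hux, hai⟩ | huQ
    · subst hux
      rcases (hmem a w).mp hw with ⟨hwx, -⟩ | hwQ
      · exact G.loopless.irrefl u (hwx ▸ hadj)
      · exact hx w (QiP (hai ▸ hwQ)) hadj
    · rcases (hmem a w).mp hw with ⟨hwx, hai⟩ | hwQ
      · subst hwx
        exact hx u (QiP (hai ▸ huQ)) hadj.symm
      · exact Qind a u huQ w hwQ hadj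
  · intro a
    by_cases hai : a = i
    · subst hai
      have : Qf a = insert x (Q a) := by simp [hQf]
      rw [this, Finset.card_insert_of_notMem (hxQ a), Qi]
      omega
    · have : Qf a = Q a := by simp [hQf, hai]
      rw [this]
      exact Qsz a hai

/-- If `G` (on `r·s` vertices) has no equitable `r`-coloring, then for any almost
equitable coloring of `G − x`, every accessible class contains a neighbor of `x`;
consequently at least `r − deg_G(x)` classes are non-accessible. -/
theorem accessible_classes_meet_nbhd (V : Type*) [Fintype V] (G : SimpleGraph V) (x : V)
    (r s : ℕ) [NeZero r] (hr : 2 ≤ r) (hs : 1 ≤ s) (hcard : Fintype.card V = r * s)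
    (P : Fin r → Finset V) (hP : AEColoring G x s P)
    (hno : ¬ ∃ c : V → Fin r, IsEquitableColoring G r c) :
    (∀ i : Fin r, Accessible G P i → ∃ v ∈ P i, G.Adj x v) ∧
    r - G.degree x ≤ (Finset.univ.filter fun i : Fin r => ¬ Accessible G P i).card := by
  have h1 : ∀ i : Fin r, Accessible G P i → ∃ v ∈ P i, G.Adj x v := by
    intro i hi
    by_contra hcon
    push_neg at hcon
    exact hno (exists_equitable_of_accessible hs hP hi hcon)
  refine ⟨h1, ?_⟩
  -- the accessible classes inject into the neighborhood of `x`
  have hA : (Finset.univ.filter fun i : Fin r => Accessible G P i).card ≤ G.degree x := by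
    choose f hfP hfadj using h1
    set g : Fin r → V := fun i =>
      if h : Accessible G P i then f i h else x with hg
    rw [← SimpleGraph.card_neighborFinset_eq_degree]
    apply Finset.card_le_card_of_injOn g
    · intro a ha
      rw [Finset.mem_coe, Finset.mem_filter] at ha
      rw [Finset.mem_coe, SimpleGraph.mem_neighborFinset]
      simp only [hg, dif_pos ha.2]
      exact hfadj a ha.2
    · intro a ha b hb hab
      rw [Finset.mem_coe, Finset.mem_filter] at ha hb
      simp only [hg, dif_pos ha.2, dif_pos hb.2] at hab
      by_contra hne
      have h1 := hfP a ha.2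
      have h2 := hfP b hb.2
      exact (Finset.disjoint_left.mp (hP.1 a b hne) h1) (hab ▸ h2)
  have hsplit := Finset.card_filter_add_card_filter_not
    (s := (Finset.univ : Finset (Fin r))) (p := fun i : Fin r => Accessible G P i)
  simp only [Finset.card_univ, Fintype.card_fin] at hsplit
  omega

end Equitable
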